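/- Let S be an additive commutative semigroup and G a nilpotent group of class n. Let f, f' : S → G be polynomial maps of degree ≤ d and ≤ d' respectively, such that f(S) ⊆ C^kG and f'(S) ⊆ C^{k'}G for the lower central series of G, with k + k' ≥ n + 1. Then the elementwise product f·f' : S → G has image contained in C^{min{k,k'}}G and is a polynomial map of degree ≤ max{d, d'}. -/

import Mathlib

namespace PaperPoly

/-- `DegLE d f` means that `f : S → G` is a polynomial map of degree at most `d ∈ ℕ`:
the base case `DegLE 0 f` means `f` is constant, and `DegLE (d+1) f` means that for every
`s : S` both difference maps `L_s f : t ↦ f (s+t) * (f t)⁻¹` and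
`R_s f : t ↦ (f t)⁻¹ * f (s+t)` satisfy `DegLE d`. -/
def DegLE {S : Type*} [AddCommSemigroup S] {G : Type*} [Group G] : ℕ → (S → G) → Prop
  | 0 => fun f => ∀ t t' : S, f t = f t'
  | d + 1 => fun f => ∀ s : S,
      DegLE d (fun t => f (s + t) * (f t)⁻¹) ∧ DegLE d (fun t => (f t)⁻¹ * f (s + t))

/-- `f` is a polynomial map (of some finite degree). -/
def IsPoly {S : Type*} [AddCommSemigroup S] {G : Type*} [Group G] (f : S → G) : Prop :=
  ∃ d : ℕ, DegLE d f

universe u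

theorem lcs_succ' {G : Type*} [Group G] (n : ℕ) :
    (⊤ : Subgroup G).lowerCentralSeries (n + 1) = ⁅(⊤ : Subgroup G).lowerCentralSeries n, (⊤ : Subgroup G)⁆ := rfl

theorem lcs_map_eq {G : Type*} [Group G] {H : Type*} [Group H] (f : G →* H)
    (hf : Function.Surjective f) (n : ℕ) :
    Subgroup.map f ((⊤ : Subgroup G).lowerCentralSeries n) = (⊤ : Subgroup H).lowerCentralSeries n := by
  induction n with
  | zero =>
      simpa [lowerCentralSeries] using Subgroup.map_top_of_surjective f hf
  | succ n ih =>
      rw [lcs_succ', lcs_succ', ← ih,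
        show (⊤ : Subgroup H) = Subgroup.map f ⊤ from
          (Subgroup.map_top_of_surjective f hf).symm, ← Subgroup.map_commutator]

/-- Graded commutator relation for the lower central series:
`⁅C^{m+1} G, C^{n+1} G⁆ ≤ C^{m+n+2} G` in the paper's indexing. -/
theorem lcs_commutator_le (n : ℕ) : ∀ (G : Type u) [Group G] (m : ℕ),
    ⁅(⊤ : Subgroup G).lowerCentralSeries m, (⊤ : Subgroup G).lowerCentralSeries n⁆ ≤ (⊤ : Subgroup G).lowerCentralSeries (m + n + 1) := by
  induction n with
  | zero =>
      intro G _ m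
      rw [show (⊤ : Subgroup G).lowerCentralSeries 0 = ⊤ from rfl, ← lcs_succ']
  | succ n ih =>
      intro G _ m
      set N := (⊤ : Subgroup G).lowerCentralSeries (m + (n + 1) + 1) with hN
      haveI hnorm : N.Normal := by rw [hN]; infer_instance
      set π := QuotientGroup.mk' N with hπdef
      have hπ : Function.Surjective π := QuotientGroup.mk'_surjective N
      have hker : π.ker = N := QuotientGroup.ker_mk' N
      rw [← hker, ← Subgroup.map_eq_bot_iff, Subgroup.map_commutator,
        lcs_map_eq π hπ, lcs_map_eq π hπ]
      set Q := G ⧸ N with hQ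
      have hQbot : (⊤ : Subgroup Q).lowerCentralSeries (m + n + 2) = ⊥ := by
        rw [← lcs_map_eq π hπ, Subgroup.map_eq_bot_iff, hker]
        exact le_of_eq (by rw [hN]; ring_nf)
      rw [Subgroup.commutator_comm, lcs_succ']
      apply Subgroup.commutator_commutator_eq_bot_of_rotate
      · rw [Subgroup.commutator_comm (⊤ : Subgroup Q), ← lcs_succ']
        rw [eq_bot_iff, ← hQbot]
        calc ⁅(⊤ : Subgroup Q).lowerCentralSeries (m + 1), (⊤ : Subgroup Q).lowerCentralSeries n⁆
            ≤ (⊤ : Subgroup Q).lowerCentralSeries (m + 1 + n + 1) := ih Q (m + 1)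
          _ = (⊤ : Subgroup Q).lowerCentralSeries (m + n + 2) := by ring_nf
      · rw [eq_bot_iff, ← hQbot]
        calc ⁅⁅(⊤ : Subgroup Q).lowerCentralSeries m, (⊤ : Subgroup Q).lowerCentralSeries n⁆, (⊤ : Subgroup Q)⁆
            ≤ ⁅(⊤ : Subgroup Q).lowerCentralSeries (m + n + 1), (⊤ : Subgroup Q)⁆ :=
              Subgroup.commutator_mono (ih Q m) le_rfl
          _ = (⊤ : Subgroup Q).lowerCentralSeries (m + n + 2) := (lcs_succ' (m + n + 1)).symm

section DegLELemmas

variable {S : Type*} [AddCommSemigroup S] {G : Type*} [Group G]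

theorem degLE_ext {d : ℕ} {f g : S → G} (h : ∀ t, f t = g t) (hf : DegLE d f) : DegLE d g := by
  have : f = g := funext h
  exact this ▸ hf

theorem degLE_succ : ∀ (d : ℕ) (f : S → G), DegLE d f → DegLE (d + 1) f := by
  intro d
  induction d with
  | zero =>
      intro f hf s
      constructor
      · intro t t'; simp [hf (s + t) t, hf (s + t') t']
      · intro t t'; simp [hf (s + t) t, hf (s + t') t']
  | succ d ih =>
      intro f hf s
      exact ⟨ih _ (hf s).1, ih _ (hf s).2⟩

theorem degLE_mono {d e : ℕ} (h : d ≤ e) {f : S → G} (hf : DegLE d f) : DegLE e f := by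
  induction e with
  | zero => exact Nat.le_zero.mp h ▸ hf
  | succ e ih =>
      rcases Nat.lt_or_ge d (e + 1) with h' | h'
      · exact degLE_succ e f (ih (Nat.lt_succ_iff.mp h'))
      · exact (Nat.le_antisymm h h') ▸ hf

/-- The product of two polynomial maps of degree `≤ d` with pointwise commuting values is
again polynomial of degree `≤ d`. -/
theorem degLE_mul : ∀ (d : ℕ) (f f' : S → G), (∀ t t', Commute (f t) (f' t')) →
    DegLE d f → DegLE d f' → DegLE d (fun t => f t * f' t) := by
  intro d
  induction d with
  | zero =>
      intro f f' _ hf hf' t t'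
      simp only [hf t t', hf' t t']
  | succ d ih =>
      intro f f' hc hf hf' s
      have hcL : ∀ x y x' y' : S,
          Commute (f x * (f y)⁻¹) (f' x' * (f' y')⁻¹) := fun x y x' y' =>
        (((hc x x').mul_right (hc x y').inv_right).mul_left
          (((hc y x').inv_left).mul_right ((hc y y').inv_left.inv_right)))
      have hcR : ∀ x y x' y' : S,
          Commute ((f y)⁻¹ * f x) ((f' y')⁻¹ * f' x') := fun x y x' y' =>
        ((((hc y y').inv_left.inv_right).mul_right ((hc y x').inv_left)).mul_left
          (((hc x y').inv_right).mul_right (hc x x')))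
      constructor
      · apply degLE_ext (f := fun t => (f (s+t) * (f t)⁻¹) * (f' (s+t) * (f' t)⁻¹))
        · intro t
          have h1 : (f t)⁻¹ * f' (s + t) = f' (s + t) * (f t)⁻¹ := ((hc t (s+t)).inv_left).eq
          have h2 : (f t)⁻¹ * (f' t)⁻¹ = (f' t)⁻¹ * (f t)⁻¹ :=
            ((hc t t).inv_left.inv_right).eq
          calc f (s+t) * (f t)⁻¹ * (f' (s+t) * (f' t)⁻¹)
              = f (s+t) * ((f t)⁻¹ * f' (s+t)) * (f' t)⁻¹ := by group
            _ = f (s+t) * (f' (s+t) * (f t)⁻¹) * (f' t)⁻¹ := by rw [h1]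
            _ = f (s+t) * f' (s+t) * ((f t)⁻¹ * (f' t)⁻¹) := by group
            _ = f (s+t) * f' (s+t) * ((f' t)⁻¹ * (f t)⁻¹) := by rw [h2]
            _ = f (s+t) * f' (s+t) * (f t * f' t)⁻¹ := by group
        · exact ih _ _ (fun t t' => hcL (s+t) t (s+t') t') (hf s).1 (hf' s).1
      · apply degLE_ext (f := fun t => ((f t)⁻¹ * f (s+t)) * ((f' t)⁻¹ * f' (s+t)))
        · intro t
          have h1 : f (s + t) * (f' t)⁻¹ = (f' t)⁻¹ * f (s + t) :=
            ((hc (s+t) t).inv_right).eq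
          have h2 : (f t)⁻¹ * (f' t)⁻¹ = (f' t)⁻¹ * (f t)⁻¹ :=
            ((hc t t).inv_left.inv_right).eq
          calc (f t)⁻¹ * f (s+t) * ((f' t)⁻¹ * f' (s+t))
              = (f t)⁻¹ * (f (s+t) * (f' t)⁻¹) * f' (s+t) := by group
            _ = (f t)⁻¹ * ((f' t)⁻¹ * f (s+t)) * f' (s+t) := by rw [h1]
            _ = ((f t)⁻¹ * (f' t)⁻¹) * (f (s+t) * f' (s+t)) := by group
            _ = ((f' t)⁻¹ * (f t)⁻¹) * (f (s+t) * f' (s+t)) := by rw [h2]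
            _ = (f t * f' t)⁻¹ * (f (s+t) * f' (s+t)) := by group
        · exact ih _ _ (fun t t' => hcR (s+t) t (s+t') t') (hf s).2 (hf' s).2

end DegLELemmas

/-- Let `G` be a nilpotent group of class `n` and `S` an additive commutative semigroup.
Let `f, f' : S → G` be polynomial maps of degree `≤ d` resp. `≤ d'` whose images lie in
the terms `C^k G` resp. `C^{k'} G` of the lower central series of `G` (with the paper's
convention `C^1 G = G`, so `C^k G` is Mathlib's `(⊤ : Subgroup G).lowerCentralSeries (k-1)`), where
`k + k' ≥ n + 1`. Then the elementwise product `t ↦ f t * f' t` has image contained in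
`C^{min k k'} G` and is a polynomial map of degree `≤ max d d'`. -/
theorem product_of_high_lc_height_polynomial_maps {S : Type*} [AddCommSemigroup S]
    [Nonempty S] {G : Type*} [Group G] [Group.IsNilpotent G] (n : ℕ)
    (hn : Group.nilpotencyClass G = n)
    (f f' : S → G) (d d' : ℕ) (hf : DegLE d f) (hf' : DegLE d' f')
    (k k' : ℕ) (hk : 1 ≤ k) (hk' : 1 ≤ k')
    (hfk : ∀ t : S, f t ∈ (⊤ : Subgroup G).lowerCentralSeries (k - 1))
    (hfk' : ∀ t : S, f' t ∈ (⊤ : Subgroup G).lowerCentralSeries (k' - 1))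
    (hkk' : n + 1 ≤ k + k') :
    (∀ t : S, f t * f' t ∈ (⊤ : Subgroup G).lowerCentralSeries (min k k' - 1)) ∧
      DegLE (max d d') (fun t => f t * f' t) := by
  have hbot : (⊤ : Subgroup G).lowerCentralSeries n = ⊥ := hn ▸ Subgroup.lowerCentralSeries_nilpotencyClass
  have hcomm : ∀ t t' : S, Commute (f t) (f' t') := by
    intro t t'
    open scoped commutatorElement in
    have h1 : ⁅f t, f' t'⁆ ∈ ⁅(⊤ : Subgroup G).lowerCentralSeries (k - 1), (⊤ : Subgroup G).lowerCentralSeries (k' - 1)⁆ :=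
      Subgroup.commutator_mem_commutator (hfk t) (hfk' t')
    have h2 : ⁅(⊤ : Subgroup G).lowerCentralSeries (k - 1), (⊤ : Subgroup G).lowerCentralSeries (k' - 1)⁆ ≤
        (⊤ : Subgroup G).lowerCentralSeries n := by
      refine le_trans (lcs_commutator_le (k' - 1) G (k - 1)) (Subgroup.lowerCentralSeries_antitone _ ?_)
      omega
    have := h2 h1
    rw [hbot, Subgroup.mem_bot] at this
    exact commutatorElement_eq_one_iff_commute.mp this
  constructor
  · intro t
    exact mul_mem
      (Subgroup.lowerCentralSeries_antitone _ (by omega : min k k' - 1 ≤ k - 1) (hfk t))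
      (Subgroup.lowerCentralSeries_antitone _ (by omega : min k k' - 1 ≤ k' - 1) (hfk' t))
  · exact degLE_mul (max d d') f f' hcomm
      (degLE_mono (le_max_left d d') hf) (degLE_mono (le_max_right d d') hf')

end PaperPoly
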